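/- Let A ∈ (ℝ ∪ {−∞})^{n×n} have spectral radius λ > −∞. Then the minimum of x⁻ A x over all regular vectors x ∈ ℝⁿ equals λ, and a regular vector x attains this minimum if and only if x = (λ⁻¹ A)* u for some vector u ∈ (ℝ ∪ {−∞})ⁿ, where λ⁻¹ A denotes the matrix obtained by subtracting λ from every entry of A. -/

import Mathlib

open Finset

noncomputable section

namespace MaxPlus

/-- Max-plus multiplicative inverse: `-a` for real `a`, `⊥` for `⊥`. -/
def tinv (a : WithBot ℝ) : WithBot ℝ := WithBot.map (fun r => -r) a

/-- Max-plus rational power `a^(1/k) = a / k`. -/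
def trt (a : WithBot ℝ) (k : ℕ) : WithBot ℝ := WithBot.map (fun r => r / (k : ℝ)) a

/-- A vector is regular if it has no `⊥` (= -∞) entries. -/
def Reg {n : ℕ} (x : Fin n → WithBot ℝ) : Prop := ∀ i, x i ≠ ⊥

/-- `cdot q x = q⁻ x`, the max-plus product of the conjugate row vector `q⁻` with `x`. -/
def cdot {n : ℕ} (q x : Fin n → WithBot ℝ) : WithBot ℝ :=
  Finset.univ.sup fun i => tinv (q i) + x i

/-- Max-plus matrix-vector product. -/
def mulVec {m n : ℕ} (A : Matrix (Fin m) (Fin n) (WithBot ℝ)) (x : Fin n → WithBot ℝ) :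
    Fin m → WithBot ℝ := fun i => Finset.univ.sup fun j => A i j + x j

/-- Max-plus matrix product. -/
def tmul {l m n : ℕ} (A : Matrix (Fin l) (Fin m) (WithBot ℝ))
    (B : Matrix (Fin m) (Fin n) (WithBot ℝ)) : Matrix (Fin l) (Fin n) (WithBot ℝ) :=
  fun i j => Finset.univ.sup fun k => A i k + B k j

/-- Multiplicative conjugate transpose of a matrix. -/
def conjM {m n : ℕ} (A : Matrix (Fin m) (Fin n) (WithBot ℝ)) :
    Matrix (Fin n) (Fin m) (WithBot ℝ) := fun i j => tinv (A j i)

/-- Max-plus identity matrix. -/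
def tId {n : ℕ} : Matrix (Fin n) (Fin n) (WithBot ℝ) := fun i j => if i = j then 0 else ⊥

/-- Max-plus matrix power. -/
def tpow {n : ℕ} (A : Matrix (Fin n) (Fin n) (WithBot ℝ)) : ℕ → Matrix (Fin n) (Fin n) (WithBot ℝ)
  | 0 => tId
  | k + 1 => tmul A (tpow A k)

/-- Max-plus trace. -/
def ttr {n : ℕ} (A : Matrix (Fin n) (Fin n) (WithBot ℝ)) : WithBot ℝ :=
  Finset.univ.sup fun i => A i i

/-- `Tr(A) = tr A ⊕ tr A² ⊕ ⋯ ⊕ tr Aⁿ`. -/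
def TrOp {n : ℕ} (A : Matrix (Fin n) (Fin n) (WithBot ℝ)) : WithBot ℝ :=
  (Finset.Icc 1 n).sup fun m => ttr (tpow A m)

/-- Kleene star `A* = I ⊕ A ⊕ ⋯ ⊕ A^(n-1)`. -/
def kstar {n : ℕ} (A : Matrix (Fin n) (Fin n) (WithBot ℝ)) : Matrix (Fin n) (Fin n) (WithBot ℝ) :=
  fun i j => (Finset.range n).sup fun k => tpow A k i j

/-- Max-plus spectral radius `λ = ⊕_{m=1}^n (tr A^m)^(1/m)`. -/
def specRad {n : ℕ} (A : Matrix (Fin n) (Fin n) (WithBot ℝ)) : WithBot ℝ :=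
  (Finset.Icc 1 n).sup fun m => trt (ttr (tpow A m)) m

/-- `prodAB A B [i₁, …, i_k] = A B^{i₁} A B^{i₂} ⋯ A B^{i_k}`. -/
def prodAB {n : ℕ} (A B : Matrix (Fin n) (Fin n) (WithBot ℝ)) :
    List ℕ → Matrix (Fin n) (Fin n) (WithBot ℝ)
  | [] => tId
  | i :: t => tmul (tmul A (tpow B i)) (prodAB A B t)

/-- The all-ones (all-`𝟙 = 0`) vector. -/
def onesV (n : ℕ) : Fin n → WithBot ℝ := fun _ => 0

end MaxPlus

open MaxPlus

-- basic sup-add distribution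
lemma add_finsup {ι : Type*} (s : Finset ι) (f : ι → WithBot ℝ) (c : WithBot ℝ) :
    c + s.sup f = s.sup fun i => c + f i := by
  induction s using Finset.cons_induction with
  | empty => simp [WithBot.add_bot]
  | cons a s ha ih =>
      rw [Finset.sup_cons, Finset.sup_cons, ← ih]
      rcases le_total (f a) (s.sup f) with h|h
      · rw [sup_eq_right.2 h, sup_eq_right.2 (add_le_add_right h c)]
      · rw [sup_eq_left.2 h, sup_eq_left.2 (add_le_add_right h c)]

lemma finsup_add {ι : Type*} (s : Finset ι) (f : ι → WithBot ℝ) (c : WithBot ℝ) :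
    s.sup f + c = s.sup fun i => f i + c := by
  rw [add_comm, add_finsup]; simp [add_comm]

lemma tmul_assoc {n : ℕ} (A B C : Matrix (Fin n) (Fin n) (WithBot ℝ)) :
    tmul (tmul A B) C = tmul A (tmul B C) := by
  funext i j
  show Finset.univ.sup (fun k => tmul A B i k + C k j) = Finset.univ.sup (fun l => A i l + tmul B C l j)
  simp only [tmul, finsup_add, add_finsup]
  rw [Finset.sup_comm]
  exact Finset.sup_congr rfl fun l _ => Finset.sup_congr rfl fun k _ => (add_assoc _ _ _)

lemma mulVec_tmul {n : ℕ} (A B : Matrix (Fin n) (Fin n) (WithBot ℝ)) (u : Fin n → WithBot ℝ) :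
    mulVec (tmul A B) u = mulVec A (mulVec B u) := by
  funext i
  show Finset.univ.sup (fun j => tmul A B i j + u j) = Finset.univ.sup (fun k => A i k + mulVec B u k)
  simp only [tmul, mulVec, finsup_add, add_finsup]
  rw [Finset.sup_comm]
  exact Finset.sup_congr rfl fun l _ => Finset.sup_congr rfl fun k _ => (add_assoc _ _ _)

lemma tmul_tId {n : ℕ} (A : Matrix (Fin n) (Fin n) (WithBot ℝ)) : tmul A tId = A := by
  funext i j
  apply le_antisymm
  · apply Finset.sup_le; intro k _
    by_cases h : k = j
    · subst h; simp [tId]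
    · simp [tId, h, WithBot.add_bot]
  · have := Finset.le_sup (f := fun k => A i k + tId k j) (Finset.mem_univ j)
    show A i j ≤ Finset.univ.sup (fun k => A i k + tId k j)
    simpa [tId] using this

lemma tId_tmul {n : ℕ} (A : Matrix (Fin n) (Fin n) (WithBot ℝ)) : tmul tId A = A := by
  funext i j
  apply le_antisymm
  · apply Finset.sup_le; intro k _
    by_cases h : i = k
    · subst h; simp [tId]
    · simp [tId, h, WithBot.bot_add]
  · have := Finset.le_sup (f := fun k => tId i k + A k j) (Finset.mem_univ i)
    show A i j ≤ Finset.univ.sup (fun k => tId i k + A k j)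
    simpa [tId] using this

lemma tpow_add {n : ℕ} (A : Matrix (Fin n) (Fin n) (WithBot ℝ)) (a b : ℕ) :
    tpow A (a + b) = tmul (tpow A a) (tpow A b) := by
  induction a with
  | zero => simp [tpow, tId_tmul]
  | succ a ih =>
      have : a + 1 + b = (a + b) + 1 := by ring
      rw [this]
      show tmul A (tpow A (a+b)) = tmul (tmul A (tpow A a)) (tpow A b)
      rw [ih, tmul_assoc]

lemma tpow_one {n : ℕ} (A : Matrix (Fin n) (Fin n) (WithBot ℝ)) : tpow A 1 = A := by
  show tmul A tId = A
  exact tmul_tId A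

-- cancellation of a real constant
lemma add_coe_le_add_coe_iff (a b : WithBot ℝ) (r : ℝ) : a + (r:WithBot ℝ) ≤ b + r ↔ a ≤ b := by
  constructor
  · intro h
    have h2 := add_le_add_left h ((-r : ℝ) : WithBot ℝ)
    have e : ∀ c : WithBot ℝ, c + (r:WithBot ℝ) + ((-r:ℝ) : WithBot ℝ) = c := by
      intro c; induction c using WithBot.recBotCoe with
      | bot => simp [WithBot.bot_add]
      | coe c => rw [← WithBot.coe_add, ← WithBot.coe_add]; norm_num
    rwa [e a, e b] at h2
  · intro h; exact add_le_add_left h _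

lemma coe_add_le_coe_add_iff (a b : WithBot ℝ) (r : ℝ) : (r:WithBot ℝ) + a ≤ (r:WithBot ℝ) + b ↔ a ≤ b := by
  rw [add_comm (r:WithBot ℝ) a, add_comm (r:WithBot ℝ) b]; exact add_coe_le_add_coe_iff a b r

-- scaling: tpow of (c + A)
lemma tpow_shift {n : ℕ} (A : Matrix (Fin n) (Fin n) (WithBot ℝ)) (c : ℝ) (m : ℕ) :
    tpow (fun i j => (c : WithBot ℝ) + A i j) m = fun i j => ((m * c : ℝ) : WithBot ℝ) + tpow A m i j := by
  induction m with
  | zero =>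
      funext i j
      simp [tpow]
  | succ m ih =>
      funext i j
      show Finset.univ.sup (fun k => ((c:WithBot ℝ) + A i k) + tpow _ m k j) = _
      rw [ih]
      have : ∀ k : Fin n, ((c:WithBot ℝ) + A i k) + (((m * c : ℝ):WithBot ℝ) + tpow A m k j)
          = (((m:ℕ)+1) * c : ℝ) + (A i k + tpow A m k j) := by
        intro k
        have h1 : ((c:WithBot ℝ)) + (((m * c : ℝ):WithBot ℝ)) = ((((m:ℕ)+1) * c : ℝ) : WithBot ℝ) := by
          rw [← WithBot.coe_add]; congr 1; push_cast; ring
        rw [add_add_add_comm, h1]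
      rw [Finset.sup_congr rfl (fun k _ => this k), ← add_finsup]
      norm_num [tpow, tmul]

lemma ttr_shift {n : ℕ} (A : Matrix (Fin n) (Fin n) (WithBot ℝ)) (c : ℝ) (m : ℕ) :
    ttr (tpow (fun i j => (c : WithBot ℝ) + A i j) m) = ((m * c : ℝ):WithBot ℝ) + ttr (tpow A m) := by
  rw [tpow_shift, ttr, add_finsup]; rfl

lemma trt_coe_add (r : ℝ) (t : WithBot ℝ) (m : ℕ) (hm : m ≠ 0) :
    trt ((r:WithBot ℝ) + t) m = ((r / m : ℝ) : WithBot ℝ) + trt t m := by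
  induction t using WithBot.recBotCoe with
  | bot => simp [trt, WithBot.add_bot]
  | coe t =>
      rw [← WithBot.coe_add]
      show (((r + t)/m : ℝ) : WithBot ℝ) = _
      rw [trt]
      show (((r + t)/m : ℝ) : WithBot ℝ) = ((r/m : ℝ):WithBot ℝ) + ((t/m : ℝ):WithBot ℝ)
      rw [← WithBot.coe_add]
      norm_num [add_div]

lemma specRad_shift {n : ℕ} (A : Matrix (Fin n) (Fin n) (WithBot ℝ)) (c : ℝ) :
    specRad (fun i j => (c : WithBot ℝ) + A i j) = (c : WithBot ℝ) + specRad A := by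
  rw [specRad, add_finsup]
  apply Finset.sup_congr rfl
  intro m hm
  have hm1 : m ≠ 0 := by have := (Finset.mem_Icc.1 hm).1; omega
  rw [ttr_shift, trt_coe_add _ _ _ hm1]
  congr 2
  field_simp

lemma nsmul_bot_withbot (m : ℕ) (hm : m ≠ 0) : m • (⊥ : WithBot ℝ) = ⊥ := by
  induction m with
  | zero => omega
  | succ m ih =>
      rw [succ_nsmul]
      rcases Nat.eq_zero_or_pos m with h|h
      · subst h; simp
      · rw [ih (by omega)]; simp [WithBot.bot_add]

lemma nsmul_coe_withbot (m : ℕ) (r : ℝ) : m • ((r : WithBot ℝ)) = ((m * r : ℝ) : WithBot ℝ) := by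
  induction m with
  | zero => norm_num
  | succ m ih => rw [succ_nsmul, ih, ← WithBot.coe_add]; congr 1; push_cast; ring

lemma trt_mono {a b : WithBot ℝ} (m : ℕ) (hm : m ≠ 0) (h : a ≤ b) : trt a m ≤ trt b m := by
  induction a using WithBot.recBotCoe with
  | bot => simp [trt]
  | coe a =>
      induction b using WithBot.recBotCoe with
      | bot => exact absurd h (by simp)
      | coe b =>
          have hab : a ≤ b := WithBot.coe_le_coe.1 h
          show ((a / m : ℝ) : WithBot ℝ) ≤ ((b / m : ℝ) : WithBot ℝ)
          refine WithBot.coe_le_coe.2 ?_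
          have hm' : (0:ℝ) < m := by exact_mod_cast Nat.pos_of_ne_zero hm
          gcongr

lemma trt_nsmul_le (μ : WithBot ℝ) (m : ℕ) (hm : m ≠ 0) : trt (m • μ) m ≤ μ := by
  induction μ using WithBot.recBotCoe with
  | bot => rw [nsmul_bot_withbot m hm]; simp [trt]
  | coe r =>
      rw [nsmul_coe_withbot]
      have : (m : ℝ) ≠ 0 := by exact_mod_cast hm
      have e : (m : ℝ) * r / m = r := by field_simp
      show ((m * r / m : ℝ) : WithBot ℝ) ≤ ((r:ℝ) : WithBot ℝ)
      rw [e]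

lemma lower_bound {n : ℕ} (A : Matrix (Fin n) (Fin n) (WithBot ℝ)) (x : Fin n → WithBot ℝ)
    (hx : Reg x) : specRad A ≤ cdot x (mulVec A x) := by
  set μ := cdot x (mulVec A x) with hμ
  choose r hr using fun i => WithBot.ne_bot_iff_exists.1 (hx i)
  have tinvx : ∀ i, tinv (x i) = ((-(r i) : ℝ) : WithBot ℝ) := by
    intro i; rw [← hr i]; rfl
  have key : ∀ i j, A i j + x j ≤ μ + x i := by
    intro i j
    have h0 : A i j + x j ≤ mulVec A x i := Finset.le_sup (f := fun j => A i j + x j) (Finset.mem_univ j)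
    have h1 : tinv (x i) + (A i j + x j) ≤ μ :=
      le_trans (add_le_add_right h0 _) (Finset.le_sup (f := fun i => tinv (x i) + mulVec A x i) (Finset.mem_univ i))
    have h2 := add_le_add_right h1 ((r i : ℝ) : WithBot ℝ)
    have e : ((r i : ℝ) : WithBot ℝ) + (tinv (x i) + (A i j + x j)) = A i j + x j := by
      rw [tinvx i, ← add_assoc, ← WithBot.coe_add]
      norm_num
    rw [e] at h2
    rw [add_comm μ, ← hr i]
    exact h2
  have P : ∀ m, ∀ i j, tpow A (m+1) i j + x j ≤ (m+1) • μ + x i := by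
    intro m
    induction m with
    | zero => intro i j; rw [tpow_one, one_nsmul]; exact key i j
    | succ m ih =>
        intro i j
        show tmul A (tpow A (m+1)) i j + x j ≤ _
        rw [tmul, finsup_add]
        apply Finset.sup_le
        intro k _
        calc A i k + tpow A (m+1) k j + x j
            = A i k + (tpow A (m+1) k j + x j) := add_assoc _ _ _
          _ ≤ A i k + ((m+1) • μ + x k) := add_le_add_right (ih k j) _
          _ = (m+1) • μ + (A i k + x k) := add_left_comm _ _ _
          _ ≤ (m+1) • μ + (μ + x i) := add_le_add_right (key i k) _
          _ = (m+1+1) • μ + x i := by rw [← add_assoc, ← succ_nsmul]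
  rw [specRad]
  apply Finset.sup_le
  intro m hm
  obtain ⟨m', rfl⟩ : ∃ m', m = m' + 1 := by
    have := (Finset.mem_Icc.1 hm).1; exact ⟨m - 1, by omega⟩
  have htr : ttr (tpow A (m'+1)) ≤ (m'+1) • μ := by
    apply Finset.sup_le
    intro i _
    have h := P m' i i
    rw [← hr i, add_coe_le_add_coe_iff] at h
    exact h
  exact le_trans (trt_mono (m'+1) (by omega) htr) (trt_nsmul_le μ (m'+1) (by omega))

def pathW {n : ℕ} (B : Matrix (Fin n) (Fin n) (WithBot ℝ)) (p : ℕ → Fin n) (m : ℕ) : WithBot ℝ :=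
  ∑ k ∈ Finset.range m, B (p k) (p (k+1))

lemma pathW_le_tpow {n : ℕ} (B : Matrix (Fin n) (Fin n) (WithBot ℝ)) :
    ∀ (m : ℕ) (p : ℕ → Fin n), pathW B p m ≤ tpow B m (p 0) (p m) := by
  intro m
  induction m with
  | zero =>
      intro p
      show (0 : WithBot ℝ) ≤ tId (p 0) (p 0)
      simp [pathW, tId]
  | succ m ih =>
      intro p
      have hq := ih (fun k => p (k+1))
      have e : pathW B p (m+1) = B (p 0) (p 1) + pathW B (fun k => p (k+1)) m := by
        rw [pathW, Finset.sum_range_succ', add_comm]; rfl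
      rw [e]
      calc B (p 0) (p 1) + pathW B (fun k => p (k+1)) m
          ≤ B (p 0) (p 1) + tpow B m (p 1) (p (m+1)) := add_le_add_right hq _
        _ ≤ tpow B (m+1) (p 0) (p (m+1)) :=
            Finset.le_sup (f := fun k => B (p 0) k + tpow B m k (p (m+1))) (Finset.mem_univ (p 1))

lemma tpow_exists_path {n : ℕ} (B : Matrix (Fin n) (Fin n) (WithBot ℝ)) :
    ∀ (m : ℕ) (i j : Fin n), tpow B m i j = ⊥ ∨
      ∃ p : ℕ → Fin n, p 0 = i ∧ p m = j ∧ pathW B p m = tpow B m i j := by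
  intro m
  induction m with
  | zero =>
      intro i j
      by_cases h : i = j
      · subst h
        right
        exact ⟨fun _ => i, rfl, rfl, by simp [pathW, tpow, tId]⟩
      · left; simp [tpow, tId, h]
  | succ m ih =>
      intro i j
      have : Nonempty (Fin n) := ⟨i⟩
      obtain ⟨k, -, hk⟩ := Finset.exists_mem_eq_sup Finset.univ Finset.univ_nonempty
        (fun k => B i k + tpow B m k j)
      rcases ih k j with hb | ⟨q, hq0, hqm, hqw⟩
      · left
        show Finset.univ.sup (fun k => B i k + tpow B m k j) = ⊥
        rw [hk, hb, WithBot.add_bot]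
      · by_cases hB : B i k = ⊥
        · left
          show Finset.univ.sup (fun k => B i k + tpow B m k j) = ⊥
          rw [hk, hB, WithBot.bot_add]
        · right
          refine ⟨fun t => Nat.casesOn t i q, rfl, hqm, ?_⟩
          have e : pathW B (fun t => Nat.casesOn t i q) (m+1)
              = B i (q 0) + pathW B q m := by
            rw [pathW, Finset.sum_range_succ', add_comm]; rfl
          show _ = Finset.univ.sup (fun k => B i k + tpow B m k j)
          rw [hk, e, hq0, hqw]

lemma tpow_n_le_kstar {n : ℕ} (B : Matrix (Fin n) (Fin n) (WithBot ℝ)) (hn : 0 < n)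
    (htr0 : ∀ ℓ, 1 ≤ ℓ → ℓ ≤ n → ttr (tpow B ℓ) ≤ 0) (i j : Fin n) :
    tpow B n i j ≤ kstar B i j := by
  rcases tpow_exists_path B n i j with hb | ⟨p, hp0, hpn, hpw⟩
  · rw [hb]; exact bot_le
  rw [← hpw]
  -- pigeonhole
  obtain ⟨a, b, hne, hab⟩ : ∃ a b : Fin (n+1), a ≠ b ∧ p a = p b := by
    have hcard : Fintype.card (Fin n) < Fintype.card (Fin (n+1)) := by simp
    obtain ⟨a, b, hne, h⟩ := Fintype.exists_ne_map_eq_of_card_lt (fun t : Fin (n+1) => p t) hcard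
    exact ⟨a, b, hne, h⟩
  wlog hlt : (a : ℕ) < (b : ℕ) generalizing a b
  · exact this b a hne.symm hab.symm (by omega)
  set a' : ℕ := (a : ℕ) with ha'
  set b' : ℕ := (b : ℕ) with hb'
  have hb'n : b' ≤ n := by omega
  have hsplit : pathW B p n =
      (pathW B p a' + ∑ k ∈ Finset.Ico a' b', B (p k) (p (k+1)))
        + ∑ k ∈ Finset.Ico b' n, B (p k) (p (k+1)) := by
    rw [pathW, Finset.range_eq_Ico,
      ← Finset.sum_Ico_consecutive (fun k => B (p k) (p (k+1))) (Nat.zero_le b') hb'n,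
      ← Finset.sum_Ico_consecutive (fun k => B (p k) (p (k+1))) (Nat.zero_le a') (le_of_lt hlt),
      pathW, Finset.range_eq_Ico]
  have hS2 : ∑ k ∈ Finset.Ico a' b', B (p k) (p (k+1)) ≤ 0 := by
    have e2 : ∑ k ∈ Finset.Ico a' b', B (p k) (p (k+1)) = pathW B (fun t => p (a' + t)) (b' - a') := by
      rw [Finset.sum_Ico_eq_sum_range, pathW]; exact Finset.sum_congr rfl fun k _ => by rw [Nat.add_assoc]
    rw [e2]
    have h1 := pathW_le_tpow B (b' - a') (fun t => p (a' + t))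
    have e3 : a' + (b' - a') = b' := by omega
    rw [e3] at h1
    have h2 : tpow B (b' - a') (p a') (p b') ≤ ttr (tpow B (b' - a')) := by
      rw [show p b' = p a' from hab.symm]
      exact Finset.le_sup (f := fun i => tpow B (b'-a') i i) (Finset.mem_univ (p a'))
    exact le_trans h1 (le_trans h2 (htr0 _ (by omega) (by omega)))
  have hS1 := pathW_le_tpow B a' p
  have hS3 : ∑ k ∈ Finset.Ico b' n, B (p k) (p (k+1)) ≤ tpow B (n - b') (p b') (p n) := by
    have e2 : ∑ k ∈ Finset.Ico b' n, B (p k) (p (k+1)) = pathW B (fun t => p (b' + t)) (n - b') := by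
      rw [Finset.sum_Ico_eq_sum_range, pathW]; exact Finset.sum_congr rfl fun k _ => by rw [Nat.add_assoc]
    rw [e2]
    have h1 := pathW_le_tpow B (n - b') (fun t => p (b' + t))
    have e3 : b' + (n - b') = n := by omega
    rwa [e3] at h1
  rw [hsplit]
  calc (pathW B p a' + ∑ k ∈ Finset.Ico a' b', B (p k) (p (k+1)))
        + ∑ k ∈ Finset.Ico b' n, B (p k) (p (k+1))
      ≤ (tpow B a' (p 0) (p a') + 0) + tpow B (n - b') (p b') (p n) :=
        add_le_add (add_le_add hS1 hS2) hS3
    _ = tpow B a' (p 0) (p a') + tpow B (n - b') (p b') (p n) := by rw [add_zero]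
    _ ≤ tpow B (a' + (n - b')) i j := by
        rw [hp0] at *
        rw [hpn]
        rw [tpow_add]
        rw [show p b' = p a' from hab.symm]
        exact Finset.le_sup (f := fun k => tpow B a' i k + tpow B (n - b') k j)
          (Finset.mem_univ (p a'))
    _ ≤ kstar B i j :=
        Finset.le_sup (f := fun k => tpow B k i j) (Finset.mem_range.2 (by omega))

lemma tpow_le_kstar_of_le {n : ℕ} (B : Matrix (Fin n) (Fin n) (WithBot ℝ)) (hn : 0 < n)
    (htr0 : ∀ ℓ, 1 ≤ ℓ → ℓ ≤ n → ttr (tpow B ℓ) ≤ 0) {m : ℕ} (hm : m ≤ n) (i j : Fin n) :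
    tpow B m i j ≤ kstar B i j := by
  rcases lt_or_eq_of_le hm with h | rfl
  · exact Finset.le_sup (f := fun k => tpow B k i j) (Finset.mem_range.2 h)
  · exact tpow_n_le_kstar B hn htr0 i j

lemma tmul_kstar_le {n : ℕ} (B : Matrix (Fin n) (Fin n) (WithBot ℝ)) (hn : 0 < n)
    (htr0 : ∀ ℓ, 1 ≤ ℓ → ℓ ≤ n → ttr (tpow B ℓ) ≤ 0) (i j : Fin n) :
    tmul B (kstar B) i j ≤ kstar B i j := by
  show Finset.univ.sup (fun k => B i k + kstar B k j) ≤ _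
  apply Finset.sup_le
  intro k _
  rw [kstar, add_finsup]
  apply Finset.sup_le
  intro t ht
  have h1 : B i k + tpow B t k j ≤ tpow B (t+1) i j :=
    Finset.le_sup (f := fun k => B i k + tpow B t k j) (Finset.mem_univ k)
  exact le_trans h1 (tpow_le_kstar_of_le B hn htr0 (by
    have := Finset.mem_range.1 ht; omega) i j)

lemma mulVec_mono {n : ℕ} (B : Matrix (Fin n) (Fin n) (WithBot ℝ)) {x y : Fin n → WithBot ℝ}
    (h : ∀ j, x j ≤ y j) (i : Fin n) : mulVec B x i ≤ mulVec B y i :=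
  Finset.sup_mono_fun fun j _ => add_le_add_right (h j) _

lemma mulVec_matMono {n : ℕ} {B C : Matrix (Fin n) (Fin n) (WithBot ℝ)}
    (h : ∀ i j, B i j ≤ C i j) (u : Fin n → WithBot ℝ) (i : Fin n) :
    mulVec B u i ≤ mulVec C u i :=
  Finset.sup_mono_fun fun j _ => add_le_add_left (h i j) _

lemma star_subeigen {n : ℕ} (B : Matrix (Fin n) (Fin n) (WithBot ℝ)) (hn : 0 < n)
    (htr0 : ∀ ℓ, 1 ≤ ℓ → ℓ ≤ n → ttr (tpow B ℓ) ≤ 0) (u : Fin n → WithBot ℝ) (i : Fin n) :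
    mulVec B (mulVec (kstar B) u) i ≤ mulVec (kstar B) u i := by
  rw [← mulVec_tmul]
  exact mulVec_matMono (tmul_kstar_le B hn htr0) u i

lemma mulVec_kstar_eq_self {n : ℕ} (B : Matrix (Fin n) (Fin n) (WithBot ℝ)) (hn : 0 < n)
    (x : Fin n → WithBot ℝ) (hBx : ∀ i, mulVec B x i ≤ x i) : mulVec (kstar B) x = x := by
  have hpows : ∀ t i, mulVec (tpow B t) x i ≤ x i := by
    intro t
    induction t with
    | zero =>
        intro i
        apply Finset.sup_le
        intro j _
        by_cases h : i = j
        · subst h; simp [tpow, tId]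
        · simp [tpow, tId, h, WithBot.bot_add]
    | succ t ih =>
        intro i
        show mulVec (tmul B (tpow B t)) x i ≤ x i
        rw [mulVec_tmul]
        exact le_trans (mulVec_mono B ih i) (hBx i)
  funext i
  apply le_antisymm
  · show Finset.univ.sup (fun j => kstar B i j + x j) ≤ x i
    apply Finset.sup_le
    intro j _
    rw [kstar, finsup_add]
    apply Finset.sup_le
    intro t _
    exact le_trans (Finset.le_sup (f := fun j => tpow B t i j + x j) (Finset.mem_univ j)) (hpows t i)
  · have h0 : (0 : WithBot ℝ) ≤ kstar B i i := by
      have : tpow B 0 i i = 0 := by simp [tpow, tId]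
      rw [← this]
      exact Finset.le_sup (f := fun k => tpow B k i i) (Finset.mem_range.2 hn)
    calc x i = 0 + x i := (zero_add _).symm
      _ ≤ kstar B i i + x i := add_le_add_left h0 _
      _ ≤ mulVec (kstar B) x i :=
          Finset.le_sup (f := fun j => kstar B i j + x j) (Finset.mem_univ i)

lemma trt_le_zero {t : WithBot ℝ} {m : ℕ} (hm : m ≠ 0) (h : trt t m ≤ 0) : t ≤ 0 := by
  induction t using WithBot.recBotCoe with
  | bot => exact bot_le
  | coe a =>
      have hm' : (0:ℝ) < m := by exact_mod_cast Nat.pos_of_ne_zero hm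
      have h2 : ((a / m : ℝ) : WithBot ℝ) ≤ ((0:ℝ) : WithBot ℝ) := by
        rw [WithBot.coe_zero]; exact h
      have h3 : a / m ≤ 0 := WithBot.coe_le_coe.1 h2
      have h4 : a / (m:ℝ) * m ≤ 0 := mul_nonpos_of_nonpos_of_nonneg h3 hm'.le
      rw [div_mul_cancel₀ a hm'.ne'] at h4
      rw [← WithBot.coe_zero]
      exact WithBot.coe_le_coe.2 h4


theorem stmt_10 {n : ℕ} (A : Matrix (Fin n) (Fin n) (WithBot ℝ))
    (hlam : ⊥ < specRad A) :
    IsLeast {v | ∃ x : Fin n → WithBot ℝ, Reg x ∧ cdot x (mulVec A x) = v} (specRad A) ∧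
      ∀ x : Fin n → WithBot ℝ, Reg x →
        (cdot x (mulVec A x) = specRad A ↔
          ∃ u : Fin n → WithBot ℝ,
            x = mulVec (kstar fun i j => tinv (specRad A) + A i j) u) := by
  have hn : 0 < n := by
    by_contra h
    have hn0 : n = 0 := by omega
    subst hn0
    rw [specRad, Finset.Icc_eq_empty (by omega), Finset.sup_empty] at hlam
    exact lt_irrefl _ hlam
  obtain ⟨l, hl⟩ : ∃ l : ℝ, ((l:ℝ) : WithBot ℝ) = specRad A :=
    WithBot.ne_bot_iff_exists.1 (ne_of_gt hlam)
  set B : Matrix (Fin n) (Fin n) (WithBot ℝ) := fun i j => tinv (specRad A) + A i j with hB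
  have hBalt : ∀ i j, B i j = ((-l : ℝ) : WithBot ℝ) + A i j := by
    intro i j; rw [hB]; dsimp only; rw [← hl]; rfl
  have hBeq : B = fun i j => ((-l : ℝ) : WithBot ℝ) + A i j :=
    funext fun i => funext fun j => hBalt i j
  have hsrB : specRad B = 0 := by
    rw [hBeq, specRad_shift, ← hl, ← WithBot.coe_add]; norm_num
  have htr0 : ∀ ℓ, 1 ≤ ℓ → ℓ ≤ n → ttr (tpow B ℓ) ≤ 0 := by
    intro ℓ h1 h2
    have h := Finset.le_sup (f := fun m => trt (ttr (tpow B m)) m) (Finset.mem_Icc.2 ⟨h1, h2⟩)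
    rw [← specRad, hsrB] at h
    exact trt_le_zero (by omega) h
  have hub : ∀ x : Fin n → WithBot ℝ, Reg x → (∀ i, mulVec B x i ≤ x i) →
      cdot x (mulVec A x) ≤ specRad A := by
    intro x hx hsub
    choose r hr using fun i => WithBot.ne_bot_iff_exists.1 (hx i)
    rw [← hl]
    apply Finset.sup_le
    intro i _
    have hAx : mulVec A x i ≤ ((l + r i : ℝ) : WithBot ℝ) := by
      apply Finset.sup_le
      intro j _
      have h1 : B i j + x j ≤ x i :=
        le_trans (Finset.le_sup (f := fun j => B i j + x j) (Finset.mem_univ j)) (hsub i)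
      have h2 := add_le_add_right h1 ((l : ℝ) : WithBot ℝ)
      have e : ((l:ℝ) : WithBot ℝ) + (B i j + x j) = A i j + x j := by
        rw [hBalt i j, ← add_assoc, ← add_assoc, ← WithBot.coe_add]
        norm_num
      rw [e, ← hr i, ← WithBot.coe_add] at h2
      exact h2
    have h3 := add_le_add_right hAx (tinv (x i))
    refine le_trans h3 ?_
    rw [← hr i]
    show tinv ((r i : ℝ) : WithBot ℝ) + _ ≤ _
    have e2 : tinv ((r i : ℝ):WithBot ℝ) = (((-r i : ℝ)) : WithBot ℝ) := rfl
    rw [e2, ← WithBot.coe_add]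
    exact WithBot.coe_le_coe.2 (le_of_eq (by ring))
  have hreg0 : Reg (mulVec (kstar B) (onesV n)) := by
    intro i
    have hkd : (0:WithBot ℝ) ≤ kstar B i i := by
      have h00 : tpow B 0 i i = 0 := by simp [tpow, tId]
      rw [← h00]
      exact Finset.le_sup (f := fun k => tpow B k i i) (Finset.mem_range.2 hn)
    have h0 : (0 : WithBot ℝ) ≤ mulVec (kstar B) (onesV n) i := by
      have h1 : kstar B i i + onesV n i ≤ mulVec (kstar B) (onesV n) i :=
        Finset.le_sup (f := fun j => kstar B i j + onesV n j) (Finset.mem_univ i)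
      have e : kstar B i i + onesV n i = kstar B i i := by
        show kstar B i i + 0 = kstar B i i; rw [add_zero]
      rw [e] at h1
      exact le_trans hkd h1
    intro hbot; rw [hbot] at h0; simp at h0
  have hmem : cdot (mulVec (kstar B) (onesV n)) (mulVec A (mulVec (kstar B) (onesV n))) = specRad A :=
    le_antisymm (hub _ hreg0 (star_subeigen B hn htr0 (onesV n))) (lower_bound A _ hreg0)
  refine ⟨⟨⟨mulVec (kstar B) (onesV n), hreg0, hmem⟩, ?_⟩, ?_⟩
  · rintro v ⟨x, hx, rfl⟩
    exact lower_bound A x hx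
  · intro x hx
    constructor
    · intro hcd
      choose r hr using fun i => WithBot.ne_bot_iff_exists.1 (hx i)
      have hBx : ∀ i, mulVec B x i ≤ x i := by
        intro i
        apply Finset.sup_le
        intro j _
        have h0 : A i j + x j ≤ mulVec A x i :=
          Finset.le_sup (f := fun j => A i j + x j) (Finset.mem_univ j)
        have h1 : tinv (x i) + (A i j + x j) ≤ ((l:ℝ) : WithBot ℝ) := by
          rw [hl, ← hcd]
          exact le_trans (add_le_add_right h0 _)
            (Finset.le_sup (f := fun i => tinv (x i) + mulVec A x i) (Finset.mem_univ i))
        have h2 := add_le_add_right h1 (((r i - l : ℝ)) : WithBot ℝ)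
        have e1 : ((r i - l : ℝ) : WithBot ℝ) + (tinv (x i) + (A i j + x j)) = B i j + x j := by
          rw [hBalt i j, ← hr i]
          show ((r i - l : ℝ):WithBot ℝ) + ((((-(r i) : ℝ)):WithBot ℝ) + (A i j + x j))
              = (((-l:ℝ):WithBot ℝ) + A i j) + x j
          rw [← add_assoc, ← WithBot.coe_add]
          have : r i - l + -(r i) = -l := by ring
          rw [this, add_assoc]
        have e2 : ((r i - l : ℝ):WithBot ℝ) + ((l:ℝ):WithBot ℝ) = x i := by
          rw [← WithBot.coe_add, ← hr i]
          congr 1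
          ring
        rw [e1, e2] at h2
        exact h2
      exact ⟨x, (mulVec_kstar_eq_self B hn x hBx).symm⟩
    · rintro ⟨u, rfl⟩
      exact le_antisymm (hub _ hx (star_subeigen B hn htr0 u)) (lower_bound A _ hx)
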